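/- Let H be a complex Hilbert space, c > 0, and let A : ℝ → B(H) be a norm-continuous family of self-adjoint bounded operators satisfying Re⟨A(t) x, x⟩ ≤ −c (1+t²)^{−1} ‖x‖² for all t ≥ 0 and x ∈ H. Suppose σ : [0,∞) → H is differentiable with σ′(t) = −A(t) σ(t) for all t ≥ 0, and σ(t₀) ≠ 0 for some t₀ ≥ 0. Then σ is not square-integrable: the function t ↦ ‖σ(t)‖² is not Lebesgue-integrable on (0,∞). -/

import Mathlib

open MeasureTheory

/-- If `A(t)` is a norm-continuous family of self-adjoint bounded
operators with `Re⟨A(t)x, x⟩ ≤ -c(1+t²)⁻¹‖x‖²` for `t ≥ 0` (`c > 0`), and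
`σ : [0,∞) → H` solves `σ' = -A(t)σ` and is nonzero somewhere, then `t ↦ ‖σ(t)‖²` is not
integrable on `(0, ∞)`. -/
theorem stmt16 {H : Type*} [NormedAddCommGroup H] [InnerProductSpace ℂ H]
    [CompleteSpace H]
    (c : ℝ) (hc : 0 < c)
    (A : ℝ → H →L[ℂ] H) (hA : Continuous A)
    (hAsa : ∀ t : ℝ, IsSelfAdjoint (A t))
    (hAneg : ∀ t : ℝ, 0 ≤ t → ∀ x : H,
      (inner ℂ (A t x) x : ℂ).re ≤ -c * (1 + t ^ 2)⁻¹ * ‖x‖ ^ 2)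
    (σ : ℝ → H)
    (hσ : ∀ t : ℝ, 0 ≤ t → HasDerivWithinAt σ (-(A t (σ t))) (Set.Ici (0 : ℝ)) t)
    (t₀ : ℝ) (ht₀ : 0 ≤ t₀) (hne : σ t₀ ≠ 0) :
    ¬ IntegrableOn (fun t => ‖σ t‖ ^ 2) (Set.Ioi (0 : ℝ)) := by
  set f : ℝ → ℝ := fun t => ‖σ t‖ ^ 2 with hfdef
  -- derivative of f within Ici 0
  have hder : ∀ t : ℝ, 0 ≤ t →
      HasDerivWithinAt f (-2 * (inner ℂ (A t (σ t)) (σ t) : ℂ).re) (Set.Ici (0 : ℝ)) t := by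
    intro t ht
    have h := (hσ t ht).inner ℂ (hσ t ht)
    have h2 := Complex.reCLM.hasFDerivAt.comp_hasDerivWithinAt t h
    have hfun : (fun s : ℝ => Complex.reCLM ((inner ℂ (σ s) (σ s)) : ℂ)) = f := by
      funext s
      simp [hfdef, Complex.reCLM_apply, ← inner_self_eq_norm_sq (𝕜 := ℂ)]
    simp only [Function.comp_def] at h2
    rw [hfun] at h2
    refine h2.congr_deriv ?_
    have hsymm := inner_re_symm (𝕜 := ℂ) (σ t) (A t (σ t))
    simp only [RCLike.re_to_complex] at hsymm
    simp [inner_neg_left, inner_neg_right]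
    rw [hsymm]
    ring
  -- f is monotone on Ici 0
  have hmono : MonotoneOn f (Set.Ici (0 : ℝ)) := by
    apply monotoneOn_of_hasDerivWithinAt_nonneg (convex_Ici 0)
      (f' := fun t => -2 * (inner ℂ (A t (σ t)) (σ t) : ℂ).re)
    · intro x hx
      exact (hder x hx).continuousWithinAt
    · intro x hx
      rw [interior_Ici] at hx
      exact ((hder x (le_of_lt hx)).mono Set.Ioi_subset_Ici_self).mono
        (by rw [interior_Ici])
    · intro x hx
      rw [interior_Ici] at hx
      have h1 := hAneg x (le_of_lt hx) (σ x)
      have h2 : (0:ℝ) < (1 + x ^ 2)⁻¹ := by positivity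
      have h3 : 0 ≤ c * (1 + x ^ 2)⁻¹ * ‖σ x‖ ^ 2 :=
        mul_nonneg (mul_nonneg hc.le h2.le) (sq_nonneg _)
      nlinarith
  -- positivity at t₀
  have hε : 0 < f t₀ := by
    have : 0 < ‖σ t₀‖ := norm_pos_iff.mpr hne
    positivity
  intro hint
  have hsub : Set.Ioi t₀ ⊆ Set.Ioi (0 : ℝ) := Set.Ioi_subset_Ioi ht₀
  have hint' : IntegrableOn f (Set.Ioi t₀) := hint.mono_set hsub
  have hconst : IntegrableOn (fun _ : ℝ => f t₀) (Set.Ioi t₀) := by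
    refine Integrable.mono' hint' aestronglyMeasurable_const ?_
    refine (ae_restrict_iff' measurableSet_Ioi).2 (Filter.Eventually.of_forall ?_)
    intro t ht
    have hle : f t₀ ≤ f t := hmono (Set.mem_Ici.mpr ht₀)
      (Set.mem_Ici.mpr (le_of_lt (lt_of_le_of_lt ht₀ ht))) (le_of_lt ht)
    rw [Real.norm_eq_abs, abs_of_pos hε]
    exact hle
  rw [integrableOn_const_iff] at hconst
  rcases hconst with h | h
  · exact absurd (enorm_eq_zero.mp h) (ne_of_gt hε)
  · simp [Real.volume_Ioi] at h
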